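/- Let B be an invertible real 2×2 matrix, a ∈ ℝ², F(x̂) = B x̂ + a, and J := det B. Let Û ⊆ ℝ² be open, let ẑ : Û → ℝ be twice continuously differentiable, and set z := ẑ ∘ F⁻¹ on F(Û). Let M̂ : Û → ℝ^{2×2} be any matrix field with Piola–Kirchhoff transform M, i.e. M(F(x̂)) := |J|⁻¹ B M̂(x̂) Bᵀ. Then for every x̂ ∈ Û, |J| · (∇∇z(F(x̂)) : M(F(x̂))) = ∇∇ẑ(x̂) : M̂(x̂). -/

import Mathlib

/-- The `i`-th partial derivative of a scalar field on `ℝ²`. -/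
noncomputable def pd (i : Fin 2) (f : (Fin 2 → ℝ) → ℝ) (x : Fin 2 → ℝ) : ℝ :=
  fderiv ℝ f x (Pi.single i 1)

/-- The Hessian `∇∇z = (∂_i ∂_j z)_{ij}` of a scalar field. -/
noncomputable def hessian (f : (Fin 2 → ℝ) → ℝ) (x : Fin 2 → ℝ) :
    Matrix (Fin 2) (Fin 2) ℝ :=
  Matrix.of fun i j => pd i (pd j f) x

/-- Frobenius inner product `A : C = Σ_{i,j} A_{ij} C_{ij}` of 2×2 matrices. -/
def frob (A C : Matrix (Fin 2) (Fin 2) ℝ) : ℝ :=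
  ∑ i : Fin 2, ∑ j : Fin 2, A i j * C i j

lemma clm_apply_pi (f' : (Fin 2 → ℝ) →L[ℝ] ℝ) (v : Fin 2 → ℝ) :
    f' v = ∑ m, v m * f' (Pi.single m 1) := by
  have hv : v = ∑ m : Fin 2, v m • (Pi.single m 1 : Fin 2 → ℝ) := by
    ext k; simp [Pi.single_apply, Finset.sum_apply]
  conv_lhs => rw [hv]
  simp [map_sum]

lemma pd_affine_comp (C : Matrix (Fin 2) (Fin 2) ℝ) (b : Fin 2 → ℝ)
    (f : (Fin 2 → ℝ) → ℝ) (y : Fin 2 → ℝ)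
    (hf : DifferentiableAt ℝ f (C.mulVec (y - b))) (j : Fin 2) :
    pd j (fun y => f (C.mulVec (y - b))) y
      = ∑ m, C m j * pd m f (C.mulVec (y - b)) := by
  set Li : (Fin 2 → ℝ) →L[ℝ] (Fin 2 → ℝ) :=
    LinearMap.toContinuousLinearMap C.mulVecLin
  have hG : HasFDerivAt (fun y => C.mulVec (y - b)) Li y := by
    have h1 : HasFDerivAt (fun y : Fin 2 → ℝ => y - b)
        (ContinuousLinearMap.id ℝ (Fin 2 → ℝ)) y := (hasFDerivAt_id y).sub_const b
    have h2 := Li.hasFDerivAt.comp y h1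
    rw [ContinuousLinearMap.comp_id] at h2
    exact h2
  have hc : HasFDerivAt (fun y => f (C.mulVec (y - b)))
      ((fderiv ℝ f (C.mulVec (y - b))).comp Li) y := hf.hasFDerivAt.comp y hG
  rw [pd, hc.fderiv]
  have : Li (Pi.single j 1) = C.mulVec (Pi.single j 1) := rfl
  rw [ContinuousLinearMap.comp_apply, this, Matrix.mulVec_single]
  rw [clm_apply_pi]
  simp [pd, mul_comm]

lemma diffAt_affine (C : Matrix (Fin 2) (Fin 2) ℝ) (b : Fin 2 → ℝ)
    (f : (Fin 2 → ℝ) → ℝ) (y : Fin 2 → ℝ)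
    (hf : DifferentiableAt ℝ f (C.mulVec (y - b))) :
    DifferentiableAt ℝ (fun y => f (C.mulVec (y - b))) y := by
  set Li : (Fin 2 → ℝ) →L[ℝ] (Fin 2 → ℝ) :=
    LinearMap.toContinuousLinearMap C.mulVecLin
  have hG : DifferentiableAt ℝ (fun y : Fin 2 → ℝ => C.mulVec (y - b)) y := by
    have : (fun y : Fin 2 → ℝ => C.mulVec (y - b)) = fun y => Li (y - b) := rfl
    rw [this]
    exact Li.differentiableAt.comp y ((differentiableAt_id.sub_const b))
  exact hf.comp y hG

open Matrix in
lemma frob_eq_trace (A C : Matrix (Fin 2) (Fin 2) ℝ) :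
    frob A C = Matrix.trace (A * Cᵀ) := by
  simp [frob, Matrix.trace, Matrix.mul_apply, Matrix.diag, Fin.sum_univ_two,
    Matrix.transpose_apply]

/-- For `z = ẑ ∘ F⁻¹` and the Piola–Kirchhoff transform `M` of `M̂`,
`|J| (∇∇z(F x̂) : M(F x̂)) = ∇∇ẑ(x̂) : M̂(x̂)` (Lemma 8, second identity, smooth case).
Here `zhat` plays the role of `ẑ`, `Mhat` of `M̂`, `Uhat` of `Û`, `xhat` of `x̂`. -/
theorem stmt6
    (B : Matrix (Fin 2) (Fin 2) ℝ) (hB : IsUnit B.det) (a : Fin 2 → ℝ)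
    (F : (Fin 2 → ℝ) → (Fin 2 → ℝ)) (hF : ∀ xhat, F xhat = B.mulVec xhat + a)
    (Uhat : Set (Fin 2 → ℝ)) (hUhat : IsOpen Uhat)
    (zhat z : (Fin 2 → ℝ) → ℝ)
    (hzhat : ContDiffOn ℝ 2 zhat Uhat)
    (hz : ∀ xhat ∈ Uhat, z (F xhat) = zhat xhat)
    (Mhat M : (Fin 2 → ℝ) → Matrix (Fin 2) (Fin 2) ℝ)
    (hM : ∀ xhat ∈ Uhat, M (F xhat) = |B.det|⁻¹ • (B * Mhat xhat * B.transpose)) :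
    ∀ xhat ∈ Uhat,
      |B.det| * frob (hessian z (F xhat)) (M (F xhat))
        = frob (hessian zhat xhat) (Mhat xhat) := by
  intro xhat hx
  set Bi := B⁻¹ with hBidef
  have hBiB : Bi * B = 1 := Matrix.nonsing_inv_mul B hB
  have hBBi : B * Bi = 1 := Matrix.mul_nonsing_inv B hB
  set G : (Fin 2 → ℝ) → (Fin 2 → ℝ) := fun y => Bi.mulVec (y - a) with hGdef
  have hGF : ∀ x, G (F x) = x := by
    intro x
    simp only [hGdef, hF, add_sub_cancel_right, Matrix.mulVec_mulVec, hBiB,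
      Matrix.one_mulVec]
  have hFG : ∀ y, F (G y) = y := by
    intro y
    simp only [hGdef, hF, Matrix.mulVec_mulVec, hBBi, Matrix.one_mulVec]
    abel
  set V : Set (Fin 2 → ℝ) := F '' Uhat with hVdef
  have hVG : V = G ⁻¹' Uhat := by
    ext y
    constructor
    · rintro ⟨x, hxU, rfl⟩; simpa [hGF x] using hxU
    · intro h; exact ⟨G y, h, hFG y⟩
  have hVopen : IsOpen V := by
    rw [hVG]
    have hGc : Continuous G := by
      have : G = fun y => (LinearMap.toContinuousLinearMap Bi.mulVecLin) (y - a) := rfl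
      rw [this]
      exact (LinearMap.toContinuousLinearMap Bi.mulVecLin).continuous.comp
        (continuous_id.sub continuous_const)
    exact hUhat.preimage hGc
  have hzV : ∀ y ∈ V, z y = zhat (G y) := by
    rintro y ⟨x, hxU, rfl⟩
    rw [hGF x]; exact hz x hxU
  -- differentiability facts for zhat
  have hzd1 : ∀ x ∈ Uhat, DifferentiableAt ℝ zhat x := fun x hxU =>
    (hzhat.contDiffAt (hUhat.mem_nhds hxU)).differentiableAt (by norm_num)
  have hpd_d : ∀ (m : Fin 2), ∀ x ∈ Uhat, DifferentiableAt ℝ (pd m zhat) x := by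
    intro m x hxU
    have h2 : ContDiffAt ℝ 2 zhat x := hzhat.contDiffAt (hUhat.mem_nhds hxU)
    have h1 : ContDiffAt ℝ 1 (fderiv ℝ zhat) x := h2.fderiv_right (by norm_num)
    have hd : DifferentiableAt ℝ (fderiv ℝ zhat) x := h1.differentiableAt (by norm_num)
    have : pd m zhat = fun x =>
        (ContinuousLinearMap.apply ℝ ℝ (Pi.single m 1 : Fin 2 → ℝ)) (fderiv ℝ zhat x) := rfl
    rw [this]
    exact ((ContinuousLinearMap.apply ℝ ℝ
      (Pi.single m 1 : Fin 2 → ℝ)).differentiableAt).comp x hd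
  -- step 1 : first derivatives of z on V
  have key1 : ∀ y ∈ V, ∀ j, pd j z y = ∑ m, Bi m j * pd m zhat (G y) := by
    intro y hyV j
    have hev : z =ᶠ[nhds y] fun y => zhat (G y) := by
      filter_upwards [hVopen.mem_nhds hyV] with y' hy' using hzV y' hy'
    have hGU : G y ∈ Uhat := by rw [hVG] at hyV; exact hyV
    have hfd : DifferentiableAt ℝ zhat (Bi.mulVec (y - a)) := hzd1 _ hGU
    calc pd j z y = pd j (fun y => zhat (G y)) y := by
          simp only [pd, hev.fderiv_eq]
      _ = ∑ m, Bi m j * pd m zhat (G y) := pd_affine_comp Bi a zhat y hfd j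
  -- step 2+3 : hessian of z at F xhat
  have hxV : F xhat ∈ V := ⟨xhat, hx, rfl⟩
  have hGFx : G (F xhat) = xhat := hGF xhat
  have key2 : ∀ i j, hessian z (F xhat) i j
      = ∑ n, ∑ m, Bi n i * Bi m j * hessian zhat xhat n m := by
    intro i j
    have hev : pd j z =ᶠ[nhds (F xhat)]
        fun y => ∑ m, Bi m j * pd m zhat (G y) := by
      filter_upwards [hVopen.mem_nhds hxV] with y hy using key1 y hy j
    have hdiff : ∀ m : Fin 2, DifferentiableAt ℝ
        (fun y => pd m zhat (G y)) (F xhat) := by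
      intro m
      exact diffAt_affine Bi a (pd m zhat) (F xhat)
        (by rw [show Bi.mulVec (F xhat - a) = xhat from hGFx]; exact hpd_d m xhat hx)
    have hthis : hessian z (F xhat) i j
        = (fderiv ℝ (fun y => ∑ m, Bi m j * pd m zhat (G y)) (F xhat)) (Pi.single i 1) := by
      show (fderiv ℝ (pd j z) (F xhat)) (Pi.single i 1) = _
      rw [hev.fderiv_eq]
    rw [hthis, fderiv_fun_sum (fun m _ => ((hdiff m).const_mul (Bi m j)))]
    simp only [ContinuousLinearMap.coe_sum', Finset.sum_apply]
    have hterm : ∀ m : Fin 2,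
        (fderiv ℝ (fun y => Bi m j * pd m zhat (G y)) (F xhat)) (Pi.single i 1)
          = Bi m j * ∑ n, Bi n i * pd n (pd m zhat) xhat := by
      intro m
      rw [fderiv_const_mul (hdiff m)]
      simp only [ContinuousLinearMap.smul_apply, smul_eq_mul]
      have h1 := pd_affine_comp Bi a (pd m zhat) (F xhat)
        (by rw [show Bi.mulVec (F xhat - a) = xhat from hGFx]; exact hpd_d m xhat hx) i
      rw [show Bi.mulVec (F xhat - a) = xhat from hGFx] at h1
      exact congrArg (fun t => Bi m j * t) h1
    rw [Finset.sum_congr rfl fun m _ => hterm m]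
    simp only [Finset.mul_sum]
    rw [Finset.sum_comm]
    refine Finset.sum_congr rfl fun n _ => Finset.sum_congr rfl fun m _ => ?_
    simp only [hessian, Matrix.of_apply]
    ring
  -- step 4 : matrix identity
  have hHz : hessian z (F xhat) = Bi.transpose * hessian zhat xhat * Bi := by
    ext i j
    rw [key2 i j]
    simp [Matrix.mul_apply, Matrix.transpose_apply, Fin.sum_univ_two]
    ring
  -- step 5 : algebra
  have hdet : |B.det| ≠ 0 := by
    simpa using (hB.ne_zero : B.det ≠ 0)
  rw [hM xhat hx, hHz]
  have hsmul : frob (Bi.transpose * hessian zhat xhat * Bi)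
      (|B.det|⁻¹ • (B * Mhat xhat * B.transpose))
      = |B.det|⁻¹ * frob (Bi.transpose * hessian zhat xhat * Bi)
          (B * Mhat xhat * B.transpose) := by
    simp only [frob, Matrix.smul_apply, smul_eq_mul, Finset.mul_sum]
    refine Finset.sum_congr rfl fun i _ => Finset.sum_congr rfl fun j _ => by ring
  rw [hsmul, ← mul_assoc, mul_inv_cancel₀ hdet, one_mul]
  rw [frob_eq_trace, frob_eq_trace]
  have ht : (B * Mhat xhat * B.transpose).transpose
      = B * (Mhat xhat).transpose * B.transpose := by
    simp [Matrix.transpose_mul, Matrix.mul_assoc]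
  rw [ht]
  have hmid : Bi.transpose * hessian zhat xhat * Bi
        * (B * (Mhat xhat).transpose * B.transpose)
      = Bi.transpose * (hessian zhat xhat * (Mhat xhat).transpose) * B.transpose := by
    calc Bi.transpose * hessian zhat xhat * Bi * (B * (Mhat xhat).transpose * B.transpose)
        = Bi.transpose * hessian zhat xhat * (Bi * B)
            * ((Mhat xhat).transpose * B.transpose) := by
          simp only [Matrix.mul_assoc]
      _ = Bi.transpose * (hessian zhat xhat * (Mhat xhat).transpose) * B.transpose := by
          rw [hBiB]; simp only [Matrix.mul_one, Matrix.mul_assoc]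
  rw [hmid, Matrix.trace_mul_cycle]
  have h2 : B.transpose * Bi.transpose = 1 := by
    rw [← Matrix.transpose_mul, hBiB, Matrix.transpose_one]
  rw [← Matrix.mul_assoc, h2, Matrix.one_mul]
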